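/- arXiv:2306.02016 — 4 statements merged into one kernel-verified Lean document; each statement's English description precedes it below -/
import Mathlib

section
/- There exists no real-rational n×n transfer matrix C ∈ RH∞ such that the positive feedback interconnection [P,C] is stable for every negative imaginary (NI) P ∈ R^{n×n} without double poles at the origin (i.e. every NI P whose pole at the origin, if any, is simple). -/
open Matrix Polynomial Filter Topology
open scoped ComplexOrder

set_option maxHeartbeats 1000000
set_option synthInstance.maxHeartbeats 400000

noncomputable section

namespace NIControl

/-- Evaluate a real-rational function at a complex point (junk value at poles). -/
def evalC (f : RatFunc ℝ) (s : ℂ) : ℂ :=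
  f.eval (algebraMap ℝ ℂ) s

/-- `s` is a pole of the real-rational function `f`
(the reduced denominator vanishes at `s`). -/
def IsPoleAt (f : RatFunc ℝ) (s : ℂ) : Prop :=
  f.denom.eval₂ (algebraMap ℝ ℂ) s = 0

variable {n : ℕ}

/-- Pointwise evaluation of a real-rational transfer matrix at a complex point. -/
def evalM (G : Matrix (Fin n) (Fin n) (RatFunc ℝ)) (s : ℂ) : Matrix (Fin n) (Fin n) ℂ :=
  Matrix.of fun i j => evalC (G i j) s

/-- Pointwise evaluation of a real-rational transfer matrix at a real point. -/
def evalR (G : Matrix (Fin n) (Fin n) (RatFunc ℝ)) (x : ℝ) : Matrix (Fin n) (Fin n) ℝ :=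
  Matrix.of fun i j => (G i j).eval (RingHom.id ℝ) x

/-- Value at `s = ∞` of a proper real-rational function. -/
def atInfinity (f : RatFunc ℝ) : ℝ :=
  if f.num.degree = f.denom.degree then f.num.leadingCoeff / f.denom.leadingCoeff else 0

/-- The instantaneous gain `G(∞)` of a proper real-rational transfer matrix. -/
def evalInf (G : Matrix (Fin n) (Fin n) (RatFunc ℝ)) : Matrix (Fin n) (Fin n) ℝ :=
  Matrix.of fun i j => atInfinity (G i j)

/-- The matrix `G` has a pole at `s`. -/
def HasPole (G : Matrix (Fin n) (Fin n) (RatFunc ℝ)) (s : ℂ) : Prop :=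
  ∃ i j, IsPoleAt (G i j) s

/-- All entries of `G` are proper rational functions. -/
def Proper (G : Matrix (Fin n) (Fin n) (RatFunc ℝ)) : Prop :=
  ∀ i j, (G i j).num.degree ≤ (G i j).denom.degree

/-- All entries of `G` are strictly proper rational functions. -/
def StrictlyProper (G : Matrix (Fin n) (Fin n) (RatFunc ℝ)) : Prop :=
  ∀ i j, (G i j).num.degree < (G i j).denom.degree

/-- The pole of `G` at the origin (if any) is at most simple. -/
def NoDoubleOriginPole (G : Matrix (Fin n) (Fin n) (RatFunc ℝ)) : Prop :=
  ∀ i j, (G i j).denom.rootMultiplicity 0 ≤ 1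

/-- Membership in `RH∞`: proper and no poles in the closed right-half complex plane. -/
def MemRHinf {m : Type*} [Fintype m] (G : Matrix m m (RatFunc ℝ)) : Prop :=
  (∀ i j, (G i j).num.degree ≤ (G i j).denom.degree) ∧
  ∀ s : ℂ, 0 ≤ s.re → ∀ i j, ¬ IsPoleAt (G i j) s

/-- The point `jω` on the imaginary axis. -/
def jw (ω : ℝ) : ℂ := Complex.I * (ω : ℂ)

/-- The negative-imaginary frequency kernel `j (M − M*)`. -/
def niKer (M : Matrix (Fin n) (Fin n) ℂ) : Matrix (Fin n) (Fin n) ℂ :=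
  Complex.I • (M - Mᴴ)

/-- Negative imaginary (NI) real-rational transfer matrix. -/
def IsNI (G : Matrix (Fin n) (Fin n) (RatFunc ℝ)) : Prop :=
  Proper G ∧
  (∀ s : ℂ, 0 < s.re → ¬ HasPole G s) ∧
  (∀ ω : ℝ, 0 < ω → ¬ HasPole G (jw ω) → (niKer (evalM G (jw ω))).PosSemidef) ∧
  (∀ ω : ℝ, 0 < ω → HasPole G (jw ω) →
    ∃ R : Matrix (Fin n) (Fin n) ℂ, R.PosSemidef ∧
      Tendsto (fun s : ℂ => (s - jw ω) • Complex.I • evalM G s) (𝓝[≠] jw ω) (𝓝 R)) ∧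
  (HasPole G 0 →
    (∀ k : ℕ, 3 ≤ k → Tendsto (fun s : ℂ => s ^ k • evalM G s) (𝓝[≠] 0) (𝓝 0)) ∧
    ∃ R : Matrix (Fin n) (Fin n) ℂ, R.PosSemidef ∧
      Tendsto (fun s : ℂ => s ^ 2 • evalM G s) (𝓝[≠] 0) (𝓝 R))

/-- Strictly negative imaginary (SNI) real-rational transfer matrix. -/
def IsSNI (G : Matrix (Fin n) (Fin n) (RatFunc ℝ)) : Prop :=
  MemRHinf G ∧ ∀ ω : ℝ, 0 < ω → (niKer (evalM G (jw ω))).PosDef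

/-- Positive real (passive) real-rational transfer matrix. -/
def IsPositiveReal (G : Matrix (Fin n) (Fin n) (RatFunc ℝ)) : Prop :=
  MemRHinf G ∧ ∀ ω : ℝ, 0 ≤ ω → (evalM G (jw ω) + (evalM G (jw ω))ᴴ).PosSemidef

/-- Output strictly passive real-rational transfer matrix. -/
def IsOSP (G : Matrix (Fin n) (Fin n) (RatFunc ℝ)) : Prop :=
  MemRHinf G ∧ ∃ ε : ℝ, 0 < ε ∧ ∀ ω : ℝ, 0 ≤ ω →
    (evalM G (jw ω) + (evalM G (jw ω))ᴴ -
      (ε : ℂ) • ((evalM G (jw ω))ᴴ * evalM G (jw ω))).PosSemidef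

/-- Stability of the positive feedback interconnection `[P, C]`:
`[I; C] (I − P C)⁻¹ [I, P] ∈ RH∞`. -/
def FeedbackStable (P C : Matrix (Fin n) (Fin n) (RatFunc ℝ)) : Prop :=
  ((1 : Matrix (Fin n) (Fin n) (RatFunc ℝ)) - P * C).det ≠ 0 ∧
  MemRHinf (Matrix.fromBlocks
    (1 - P * C)⁻¹ ((1 - P * C)⁻¹ * P)
    (C * (1 - P * C)⁻¹) (C * (1 - P * C)⁻¹ * P))

/-- All eigenvalues of the complex matrix `M` are real and less than `c`. -/
def eigsRealAndLT (M : Matrix (Fin n) (Fin n) ℂ) (c : ℝ) : Prop :=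
  ∀ μ ∈ spectrum ℂ M, μ.im = 0 ∧ μ.re < c

/-- The (real) eigenvalues of the real matrix `M` are all real and its largest
eigenvalue is less than `c`. -/
def maxEigLT (M : Matrix (Fin n) (Fin n) ℝ) (c : ℝ) : Prop :=
  eigsRealAndLT (M.map (Complex.ofReal)) c

/-- Loewner order `A ≤ B` on real matrices. -/
def LoewnerLE (A B : Matrix (Fin n) (Fin n) ℝ) : Prop := (B - A).PosSemidef

/-- Strict Loewner order `A < B` on real matrices. -/
def LoewnerLT (A B : Matrix (Fin n) (Fin n) ℝ) : Prop := (B - A).PosDef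

section Aux

open scoped Polynomial

/-- Rank-one transfer matrix supported at `(0,0)` with entry `p`. -/
def rkOne (m : ℕ) (p : RatFunc ℝ) : Matrix (Fin (m+1)) (Fin (m+1)) (RatFunc ℝ) :=
  Matrix.of fun i j => if i = 0 ∧ j = 0 then p else 0

variable {m : ℕ}

lemma rkOne_apply (p : RatFunc ℝ) (i j : Fin (m+1)) :
    rkOne m p i j = if i = 0 ∧ j = 0 then p else 0 := rfl

lemma rkOne_mul (p : RatFunc ℝ) (C : Matrix (Fin (m+1)) (Fin (m+1)) (RatFunc ℝ)) (i j) :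
    (rkOne m p * C) i j = if i = 0 then p * C 0 j else 0 := by
  simp only [Matrix.mul_apply, rkOne, Matrix.of_apply]
  by_cases hi : i = 0
  · subst hi
    rw [Finset.sum_eq_single 0]
    · simp
    · intro b _ hb; simp [hb]
    · simp
  · simp [hi]

lemma mul_rkOne (p : RatFunc ℝ) (C : Matrix (Fin (m+1)) (Fin (m+1)) (RatFunc ℝ)) (i j) :
    (C * rkOne m p) i j = if j = 0 then C i 0 * p else 0 := by
  simp only [Matrix.mul_apply, rkOne, Matrix.of_apply]
  by_cases hj : j = 0
  · subst hj
    rw [Finset.sum_eq_single 0]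
    · simp
    · intro b _ hb; simp [hb]
    · simp
  · simp [hj]

lemma key_inverse (p : RatFunc ℝ) (C : Matrix (Fin (m+1)) (Fin (m+1)) (RatFunc ℝ))
    (h : 1 - p * C 0 0 ≠ 0) :
    (1 - rkOne m p * C) * (1 + (1 - p * C 0 0)⁻¹ • (rkOne m p * C)) = 1 := by
  classical
  set c := C 0 0 with hc
  set D : Matrix (Fin (m+1)) (Fin (m+1)) (RatFunc ℝ) :=
    Matrix.of fun i j => if i = 0 then C 0 j else 0 with hD
  have hPC : rkOne m p * C = p • D := by
    ext i j
    rw [rkOne_mul]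
    by_cases hi : i = 0 <;> simp [hD, hi]
  have hDD : D * D = c • D := by
    ext i j
    simp only [Matrix.mul_apply, hD, Matrix.of_apply, Matrix.smul_apply, smul_eq_mul]
    by_cases hi : i = 0
    · subst hi
      rw [Finset.sum_eq_single 0]
      · simp [hc]
      · intro b _ hb; simp [hb]
      · simp
    · simp [hi]
  set r := (1 - p * c)⁻¹ with hr
  have hrc : r * (1 - p * c) = 1 := inv_mul_cancel₀ h
  have hmul : (p • D) * (r • (p • D)) = (p * (r * p) * c) • D := by
    rw [Matrix.mul_smul, Matrix.smul_mul, Matrix.mul_smul, hDD]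
    rw [smul_smul, smul_smul, smul_smul]
    congr 1
    ring
  rw [hPC, sub_mul, mul_add, mul_add, hmul]
  simp only [one_mul, mul_one]
  have hsm : r • (p • D) = p • D + (p * (r * p) * c) • D := by
    rw [smul_smul, ← add_smul]
    congr 1
    linear_combination p * hrc
  rw [hsm, add_sub_cancel_right]

lemma inv_entry (p : RatFunc ℝ) (C : Matrix (Fin (m+1)) (Fin (m+1)) (RatFunc ℝ))
    (h : 1 - p * C 0 0 ≠ 0) :
    (1 - rkOne m p * C)⁻¹ 0 0 = (1 - p * C 0 0)⁻¹ := by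
  rw [Matrix.inv_eq_right_inv (key_inverse p C h)]
  rw [Matrix.add_apply, Matrix.smul_apply, rkOne_mul, Matrix.one_apply_eq]
  simp only [if_pos rfl, smul_eq_mul]
  field_simp
  simp

lemma B_entry (p : RatFunc ℝ) (C : Matrix (Fin (m+1)) (Fin (m+1)) (RatFunc ℝ))
    (h : 1 - p * C 0 0 ≠ 0) :
    ((1 - rkOne m p * C)⁻¹ * rkOne m p) 0 0 = p * (1 - p * C 0 0)⁻¹ := by
  have hmid : ((rkOne m p * C) * rkOne m p) 0 0 = p * C 0 0 * p := by
    rw [mul_rkOne, if_pos rfl, rkOne_mul, if_pos rfl]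
  have h2 : ((1 + (1 - p * C 0 0)⁻¹ • (rkOne m p * C)) * rkOne m p) 0 0
      = p + (1 - p * C 0 0)⁻¹ * (p * C 0 0 * p) := by
    rw [Matrix.add_mul, Matrix.one_mul, Matrix.smul_mul, Matrix.add_apply, Matrix.smul_apply,
      hmid, rkOne_apply, if_pos ⟨rfl, rfl⟩, smul_eq_mul]
  rw [Matrix.inv_eq_right_inv (key_inverse p C h), h2]
  field_simp
  ring

lemma det_zero_of (p : RatFunc ℝ) (C : Matrix (Fin (m+1)) (Fin (m+1)) (RatFunc ℝ))
    (h : p * C 0 0 = 1) :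
    (1 - rkOne m p * C).det = 0 := by
  rw [← Matrix.exists_vecMul_eq_zero_iff]
  set w : Fin (m+1) → RatFunc ℝ := fun j => p * C 0 j with hw
  refine ⟨w, ?_, ?_⟩
  · intro h0
    have := congrFun h0 0
    rw [hw] at this
    simp only [Pi.zero_apply] at this
    rw [h] at this
    exact one_ne_zero this
  · have hwP : w ᵥ* rkOne m p = fun j => if j = 0 then p else 0 := by
      funext j
      simp only [Matrix.vecMul, dotProduct, rkOne_apply, hw]
      by_cases hj : j = 0
      · subst hj
        rw [Finset.sum_eq_single 0]
        · simp [h]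
        · intro b _ hb; simp [hb]
        · simp
      · simp [hj]
    have hPCw : (fun j => if j = 0 then p else 0) ᵥ* C = w := by
      funext j
      simp only [Matrix.vecMul, dotProduct, hw]
      rw [Finset.sum_eq_single 0]
      · simp
      · intro b _ hb; simp [hb]
      · simp
    rw [Matrix.vecMul_sub, Matrix.vecMul_one, ← Matrix.vecMul_vecMul, hwP, hPCw, sub_self]

end Aux

section Eval

/-- The denominator of `p / q` doesn't vanish where `q` doesn't. -/
lemma not_isPoleAt_of_repr {p q : Polynomial ℝ} {s : ℂ}
    (hqs : q.eval₂ (algebraMap ℝ ℂ) s ≠ 0) :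
    ¬ IsPoleAt (algebraMap (Polynomial ℝ) (RatFunc ℝ) p / algebraMap _ _ q) s := by
  intro h0
  obtain ⟨t, ht⟩ := RatFunc.denom_div_dvd p q
  apply hqs
  rw [ht, Polynomial.eval₂_mul, h0, zero_mul]

lemma eval_repr {p q : Polynomial ℝ} {s : ℂ} (hq : q ≠ 0)
    (hqs : q.eval₂ (algebraMap ℝ ℂ) s ≠ 0) :
    RatFunc.eval (algebraMap ℝ ℂ) s (algebraMap (Polynomial ℝ) (RatFunc ℝ) p / algebraMap _ _ q)
      = p.eval₂ (algebraMap ℝ ℂ) s / q.eval₂ (algebraMap ℝ ℂ) s := by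
  set x := algebraMap (Polynomial ℝ) (RatFunc ℝ) p / algebraMap _ _ q with hx
  have hden : (Polynomial.eval₂ (algebraMap ℝ ℂ) s x.denom) ≠ 0 := not_isPoleAt_of_repr hqs
  have h1 : x * algebraMap (Polynomial ℝ) (RatFunc ℝ) q = algebraMap _ _ p := by
    rw [hx, div_mul_cancel₀]
    exact RatFunc.algebraMap_ne_zero hq
  have hm := RatFunc.eval_mul (f := algebraMap ℝ ℂ) (a := s) (x := x)
    (y := algebraMap (Polynomial ℝ) (RatFunc ℝ) q) hden
    (by rw [RatFunc.denom_algebraMap]; simp)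
  rw [h1] at hm
  rw [RatFunc.eval_algebraMap, RatFunc.eval_algebraMap] at hm
  simp only [Algebra.algebraMap_self, Polynomial.map_id] at hm
  rw [eq_div_iff hqs]
  exact hm.symm

lemma isPoleAt_inv {f : RatFunc ℝ} {s : ℂ} (hf : f ≠ 0)
    (hden : ¬ IsPoleAt f s) (hval : f.eval (algebraMap ℝ ℂ) s = 0) : IsPoleAt f⁻¹ s := by
  by_contra h
  have hm := RatFunc.eval_mul (f := algebraMap ℝ ℂ) (a := s) (x := f) (y := f⁻¹) hden h
  rw [mul_inv_cancel₀ hf, RatFunc.eval_one, hval, zero_mul] at hm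
  exact one_ne_zero hm

lemma num_X_inv : (RatFunc.X : RatFunc ℝ)⁻¹.num = 1 := by
  rw [← RatFunc.algebraMap_X, ← one_div, ← map_one (algebraMap (Polynomial ℝ) (RatFunc ℝ)),
    RatFunc.num_div]
  simp [EuclideanDomain.gcd_one_left]

lemma denom_X_inv : (RatFunc.X : RatFunc ℝ)⁻¹.denom = Polynomial.X := by
  rw [← RatFunc.algebraMap_X, ← one_div, ← map_one (algebraMap (Polynomial ℝ) (RatFunc ℝ)),
    RatFunc.denom_div _ Polynomial.X_ne_zero]
  simp [EuclideanDomain.gcd_one_left]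

lemma evalC_X_inv (s : ℂ) : evalC (RatFunc.X : RatFunc ℝ)⁻¹ s = s⁻¹ := by
  rw [evalC, RatFunc.eval, num_X_inv, denom_X_inv]
  simp [one_div]

end Eval

section Plants

variable {m : ℕ}

lemma posSemidef_zero' : (0 : Matrix (Fin (m+1)) (Fin (m+1)) ℂ).PosSemidef := by
  constructor
  · simp [Matrix.IsHermitian]
  · intro x; simp

/-- PSD of a nonnegative multiple of `e₀ e₀ᵀ`. -/
lemma posSemidef_corner {a : ℝ} (ha : 0 ≤ a) :
    (Matrix.of fun i j : Fin (m+1) =>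
      if i = 0 ∧ j = 0 then (a : ℂ) else 0).PosSemidef := by
  rw [Matrix.posSemidef_iff_dotProduct_mulVec]
  constructor
  · ext i j
    simp only [Matrix.conjTranspose_apply, Matrix.of_apply]
    by_cases hi : i = 0 <;> by_cases hj : j = 0 <;>
      simp [hi, hj, Complex.conj_ofReal]
  · intro x
    have hmv : (Matrix.of fun i j : Fin (m+1) =>
        if i = 0 ∧ j = 0 then (a : ℂ) else 0) *ᵥ x = fun i => if i = 0 then (a : ℂ) * x 0 else 0 := by
      funext i
      simp only [Matrix.mulVec, dotProduct, Matrix.of_apply]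
      by_cases hi : i = 0
      · subst hi
        rw [Finset.sum_eq_single 0]
        · simp
        · intro b _ hb; simp [hb]
        · simp
      · simp [hi]
    rw [hmv]
    have : (dotProduct (star x) fun i => if i = 0 then (a : ℂ) * x 0 else 0)
        = (a : ℂ) * (x 0 * (starRingEnd ℂ) (x 0)) := by
      simp only [dotProduct, Pi.star_apply]
      rw [Finset.sum_eq_single 0]
      · simp [RCLike.star_def]; ring
      · intro b _ hb; simp [hb]
      · simp
    rw [this, Complex.mul_conj, ← Complex.ofReal_mul]
    rw [Complex.zero_le_real]
    exact mul_nonneg ha (Complex.normSq_nonneg _)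

/-- The constant rank-one plant is NI. -/
lemma isNI_const (m : ℕ) (k : ℝ) :
    IsNI (rkOne m (algebraMap (Polynomial ℝ) (RatFunc ℝ) (Polynomial.C k))) := by
  set p := algebraMap (Polynomial ℝ) (RatFunc ℝ) (Polynomial.C k) with hp
  have hden : ∀ i j, ((rkOne m p) i j).denom = 1 := by
    intro i j
    rw [rkOne_apply]
    split
    · rw [hp, RatFunc.denom_algebraMap]
    · exact RatFunc.denom_zero
  have hNoPole : ∀ s : ℂ, ¬ HasPole (rkOne m p) s := by
    rintro s ⟨i, j, hij⟩
    rw [IsPoleAt, hden i j] at hij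
    simp at hij
  refine ⟨?_, fun s _ => hNoPole s, ?_, fun ω _ hP => (hNoPole _ hP).elim,
    fun hP => (hNoPole _ hP).elim⟩
  · intro i j
    rw [rkOne_apply]
    split
    · rw [hp, RatFunc.num_algebraMap, RatFunc.denom_algebraMap, Polynomial.degree_one]
      exact Polynomial.degree_C_le
    · simp
  · intro ω _ _
    have hM : evalM (rkOne m p) (jw ω)
        = Matrix.of fun i j => if i = 0 ∧ j = 0 then (k : ℂ) else 0 := by
      ext i j
      simp only [evalM, Matrix.of_apply, evalC, rkOne_apply]
      split
      · rw [hp, RatFunc.eval_algebraMap]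
        simp
      · simp
    have : niKer (evalM (rkOne m p) (jw ω)) = 0 := by
      rw [niKer, hM]
      have : (Matrix.of fun i j : Fin (m+1) => if i = 0 ∧ j = 0 then (k:ℂ) else 0)ᴴ
          = Matrix.of fun i j : Fin (m+1) => if i = 0 ∧ j = 0 then (k:ℂ) else 0 := by
        ext i j
        simp only [Matrix.conjTranspose_apply, Matrix.of_apply]
        by_cases hi : i = 0 <;> by_cases hj : j = 0 <;> simp [hi, hj, Complex.conj_ofReal]
      rw [this, sub_self, smul_zero]
    rw [this]
    exact posSemidef_zero'

lemma noDouble_const (m : ℕ) (k : ℝ) :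
    NoDoubleOriginPole (rkOne m (algebraMap (Polynomial ℝ) (RatFunc ℝ) (Polynomial.C k))) := by
  intro i j
  rw [rkOne_apply]
  split
  · rw [RatFunc.denom_algebraMap, Polynomial.rootMultiplicity_eq_zero (by simp)]
    omega
  · rw [RatFunc.denom_zero, Polynomial.rootMultiplicity_eq_zero (by simp)]
    omega

end Plants

section XinvPlant

variable {m : ℕ}

lemma evalM_rkOne_Xinv (s : ℂ) :
    evalM (rkOne m (RatFunc.X : RatFunc ℝ)⁻¹) s
      = Matrix.of fun i j => if i = 0 ∧ j = 0 then s⁻¹ else 0 := by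
  ext i j
  simp only [evalM, Matrix.of_apply, rkOne_apply]
  split
  · exact evalC_X_inv s
  · simp [evalC]

lemma isNI_Xinv (m : ℕ) : IsNI (rkOne m (RatFunc.X : RatFunc ℝ)⁻¹) := by
  set p := (RatFunc.X : RatFunc ℝ)⁻¹ with hp
  have hdenEntry : ∀ i j, ((rkOne m p) i j).denom = if i = 0 ∧ j = 0 then Polynomial.X else 1 := by
    intro i j
    rw [rkOne_apply]
    by_cases h : i = 0 ∧ j = 0
    · simp only [if_pos h, hp, denom_X_inv]
    · simp only [if_neg h, RatFunc.denom_zero]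
  have hPoleIff : ∀ s : ℂ, HasPole (rkOne m p) s → s = 0 := by
    rintro s ⟨i, j, hij⟩
    rw [IsPoleAt, hdenEntry i j] at hij
    by_cases h : i = 0 ∧ j = 0
    · rw [if_pos h] at hij
      simpa using hij
    · rw [if_neg h] at hij
      simp at hij
  refine ⟨?_, ?_, ?_, ?_, ?_⟩
  · -- proper
    intro i j
    rw [rkOne_apply]
    split
    · rw [hp, num_X_inv, denom_X_inv, Polynomial.degree_one, Polynomial.degree_X]
      norm_num
    · simp
  · -- no ORHP poles
    intro s hs hP
    have := hPoleIff s hP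
    rw [this] at hs
    simp at hs
  · -- ni kernel on the imaginary axis
    intro ω hω _
    have hωC : (ω : ℂ) ≠ 0 := by
      simpa using ne_of_gt hω
    have hM : niKer (evalM (rkOne m p) (jw ω))
        = Matrix.of fun i j => if i = 0 ∧ j = 0 then ((2/ω : ℝ) : ℂ) else 0 := by
      rw [evalM_rkOne_Xinv, niKer]
      ext i j
      simp only [Matrix.smul_apply, Matrix.sub_apply, Matrix.conjTranspose_apply, Matrix.of_apply,
        smul_eq_mul]
      by_cases h : i = 0 ∧ j = 0
      · obtain ⟨hi, hj⟩ := h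
        simp only [hi, hj, and_self, if_true]
        rw [jw]
        rw [show star (Complex.I * (ω:ℂ))⁻¹ = (starRingEnd ℂ) (Complex.I * ↑ω)⁻¹ from rfl,
          map_inv₀, _root_.map_mul, Complex.conj_I, Complex.conj_ofReal, Complex.ofReal_div]
        field_simp
        ring_nf
        norm_num
      · have h' : ¬(j = 0 ∧ i = 0) := fun hc => h ⟨hc.2, hc.1⟩
        simp [h, h']
    rw [hM]
    exact posSemidef_corner (by positivity)
  · -- no poles at jω for ω > 0
    intro ω hω hP
    have h0 := hPoleIff _ hP
    rw [jw] at h0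
    simp only [mul_eq_zero, Complex.I_ne_zero, false_or, Complex.ofReal_eq_zero] at h0
    exact absurd h0 (ne_of_gt hω)
  · -- behaviour at the origin pole
    intro _
    have key : ∀ t : ℕ, 2 ≤ t → Tendsto (fun s : ℂ => s ^ t • evalM (rkOne m p) s)
        (𝓝[≠] (0:ℂ)) (𝓝 0) := by
      intro t ht
      set E₀ : Matrix (Fin (m+1)) (Fin (m+1)) ℂ :=
        Matrix.of fun i j => if i = 0 ∧ j = 0 then (1:ℂ) else 0 with hE
      have hev : ∀ᶠ s in 𝓝[≠] (0:ℂ),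
          (fun s : ℂ => s ^ (t-1) • E₀) s = s ^ t • evalM (rkOne m p) s := by
        filter_upwards [self_mem_nhdsWithin] with s hs
        have hs' : s ≠ 0 := hs
        rw [evalM_rkOne_Xinv]
        ext i j
        simp only [Matrix.smul_apply, Matrix.of_apply, smul_eq_mul, hE]
        split
        · rw [mul_one]
          have hts : s ^ t = s ^ (t-1) * s := by
            rw [← pow_succ]
            congr 1
            omega
          rw [hts, mul_assoc, mul_inv_cancel₀ hs', mul_one]
        · simp
      have hlim : Tendsto (fun s : ℂ => s ^ (t-1) • E₀) (𝓝[≠] (0:ℂ)) (𝓝 0) := by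
        have h1 : Tendsto (fun s : ℂ => s ^ (t-1)) (𝓝 (0:ℂ)) (𝓝 0) := by
          have := (continuous_pow (t-1)).tendsto (0 : ℂ)
          rwa [zero_pow (by omega : t - 1 ≠ 0)] at this
        have h2 : Tendsto (fun s : ℂ => s ^ (t-1)) (𝓝[≠] (0:ℂ)) (𝓝 0) :=
          h1.mono_left nhdsWithin_le_nhds
        have := h2.smul_const E₀
        rwa [zero_smul] at this
      exact hlim.congr' hev
    exact ⟨fun t ht => key t (by omega), 0, posSemidef_zero', key 2 (by omega)⟩

lemma noDouble_Xinv (m : ℕ) : NoDoubleOriginPole (rkOne m (RatFunc.X : RatFunc ℝ)⁻¹) := by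
  intro i j
  rw [rkOne_apply]
  split
  · rw [denom_X_inv]
    have : (Polynomial.X : Polynomial ℝ) = Polynomial.X - Polynomial.C 0 := by simp
    rw [this, Polynomial.rootMultiplicity_X_sub_C]
    simp
  · rw [RatFunc.denom_zero, Polynomial.rootMultiplicity_eq_zero (by simp)]
    omega

end XinvPlant


lemma eval₂_id' (p : Polynomial ℝ) (x : ℝ) : p.eval₂ (RingHom.id ℝ) x = p.eval x := by
  simpa using Polynomial.eval₂_at_apply (p := p) (RingHom.id ℝ) x

/-- no stable controller robustly stabilises all NI plants
without double poles at the origin. -/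
theorem no_universal_stable_controller {n : ℕ} (hn : 0 < n) :
    ¬ ∃ C : Matrix (Fin n) (Fin n) (RatFunc ℝ), MemRHinf C ∧
      ∀ P : Matrix (Fin n) (Fin n) (RatFunc ℝ), IsNI P → NoDoubleOriginPole P → FeedbackStable P C := by
  rintro ⟨C, hC, hstab⟩
  obtain ⟨m, rfl⟩ : ∃ m, n = m + 1 := ⟨n - 1, (Nat.succ_pred_eq_of_pos hn).symm⟩
  by_cases hall : ∀ x : ℝ, 0 ≤ x → RatFunc.eval (RingHom.id ℝ) x (C 0 0) = 0
  · -- C 0 0 vanishes on [0, ∞), hence is zero; use the plant (1/s)·e₀e₀ᵀ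
    have hdenR : ∀ x : ℝ, 0 ≤ x → (C 0 0).denom.eval x ≠ 0 := by
      intro x hx h0
      refine hC.2 (x : ℂ) (by simpa using hx) 0 0 ?_
      show (C 0 0).denom.eval₂ (algebraMap ℝ ℂ) (x : ℂ) = 0
      rw [show ((x:ℂ)) = algebraMap ℝ ℂ x from rfl, Polynomial.eval₂_at_apply, h0, map_zero]
    have hnum : (C 0 0).num = 0 := by
      apply Polynomial.eq_zero_of_infinite_isRoot
      apply Set.Infinite.mono ?_ (Set.Ici_infinite (0:ℝ))
      intro x hx
      have hx' : (0:ℝ) ≤ x := hx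
      have h := hall x hx'
      rw [RatFunc.eval, eval₂_id', eval₂_id'] at h
      exact (div_eq_zero_iff.mp h).resolve_right (hdenR x hx')
    have hc0 : C 0 0 = 0 := RatFunc.num_eq_zero_iff.mp hnum
    have hfb := hstab (rkOne m (RatFunc.X : RatFunc ℝ)⁻¹) (isNI_Xinv m) (noDouble_Xinv m)
    have hne : 1 - (RatFunc.X : RatFunc ℝ)⁻¹ * C 0 0 ≠ 0 := by
      rw [hc0, mul_zero, sub_zero]; exact one_ne_zero
    have hB := B_entry (RatFunc.X : RatFunc ℝ)⁻¹ C hne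
    rw [hc0, mul_zero, sub_zero, inv_one, mul_one] at hB
    have hpole := hfb.2.2 0 (by simp) (Sum.inl 0) (Sum.inr 0)
    rw [Matrix.fromBlocks_apply₁₂] at hpole
    apply hpole
    rw [hB]
    show ((RatFunc.X : RatFunc ℝ)⁻¹).denom.eval₂ (algebraMap ℝ ℂ) 0 = 0
    rw [denom_X_inv]
    simp
  · -- C 0 0 is nonzero at some x₀ ≥ 0; use a constant rank-one plant
    push_neg at hall
    obtain ⟨x₀, hx₀, hne0⟩ := hall
    have hdC : (C 0 0).denom.eval₂ (algebraMap ℝ ℂ) (x₀:ℂ) ≠ 0 :=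
      fun h => hC.2 (x₀:ℂ) (by simpa using hx₀) 0 0 h
    have hdR : (C 0 0).denom.eval x₀ ≠ 0 := by
      intro h0
      apply hdC
      rw [show ((x₀:ℂ)) = algebraMap ℝ ℂ x₀ from rfl, Polynomial.eval₂_at_apply, h0, map_zero]
    have hcval : RatFunc.eval (RingHom.id ℝ) x₀ (C 0 0)
        = (C 0 0).num.eval x₀ / (C 0 0).denom.eval x₀ := by
      rw [RatFunc.eval, eval₂_id', eval₂_id']
    have hνR : (C 0 0).num.eval x₀ ≠ 0 := by
      intro h0
      exact hne0 (by rw [hcval, h0, zero_div])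
    set k : ℝ := (C 0 0).denom.eval x₀ / (C 0 0).num.eval x₀ with hk
    set p : RatFunc ℝ := algebraMap (Polynomial ℝ) (RatFunc ℝ) (Polynomial.C k) with hpdef
    have hfb := hstab (rkOne m p) (isNI_const m k) (noDouble_const m k)
    by_cases hone : 1 - p * C 0 0 = 0
    · exact hfb.1 (det_zero_of p C (sub_eq_zero.mp hone).symm)
    · have hrepr : 1 - p * C 0 0
          = algebraMap (Polynomial ℝ) (RatFunc ℝ) ((C 0 0).denom - Polynomial.C k * (C 0 0).num)
            / algebraMap _ _ (C 0 0).denom := by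
        rw [map_sub, _root_.map_mul, sub_div,
          div_self (RatFunc.algebraMap_ne_zero (RatFunc.denom_ne_zero (C 0 0))),
          mul_div_assoc, RatFunc.num_div_denom, hpdef]
      have hgden : ¬ IsPoleAt (1 - p * C 0 0) (x₀:ℂ) := by
        rw [hrepr]; exact not_isPoleAt_of_repr hdC
      have hgval : RatFunc.eval (algebraMap ℝ ℂ) (x₀:ℂ) (1 - p * C 0 0) = 0 := by
        rw [hrepr, eval_repr (RatFunc.denom_ne_zero (C 0 0)) hdC]
        have h1 : ((C 0 0).denom - Polynomial.C k * (C 0 0).num).eval₂ (algebraMap ℝ ℂ) (x₀:ℂ)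
            = algebraMap ℝ ℂ (((C 0 0).denom - Polynomial.C k * (C 0 0).num).eval x₀) := by
          rw [show ((x₀:ℂ)) = algebraMap ℝ ℂ x₀ from rfl, Polynomial.eval₂_at_apply]
        rw [h1]
        have h2 : ((C 0 0).denom - Polynomial.C k * (C 0 0).num).eval x₀ = 0 := by
          simp only [Polynomial.eval_sub, Polynomial.eval_mul, Polynomial.eval_C, hk]
          field_simp
          ring
        rw [h2, map_zero, zero_div]
      have hpoleInv := isPoleAt_inv hone hgden hgval
      have hA := inv_entry p C hone
      have hpole := hfb.2.2 (x₀:ℂ) (by simpa using hx₀) (Sum.inl 0) (Sum.inl 0)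
      rw [Matrix.fromBlocks_apply₁₁] at hpole
      exact hpole (by rw [hA]; exact hpoleInv)

end NIControl
end
end

section
/- Let N ∈ RH∞^{n×n} be real-rational and positive real, and let ω₀ > 0. Then the transfer matrix P(s) = (ω₀/s) N(s) is negative imaginary (NI) and satisfies P(∞) = 0. -/
open Matrix Polynomial Filter Topology
open scoped ComplexOrder

noncomputable section

namespace NIControl

variable {n : ℕ}

/-- Representation of `(C ω₀ / X) * g` as an explicit fraction. -/
private lemma ratfunc_rep (ω₀ : ℝ) (g : RatFunc ℝ) :
    RatFunc.C ω₀ / RatFunc.X * g =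
      algebraMap (Polynomial ℝ) (RatFunc ℝ) (Polynomial.C ω₀ * g.num) /
        algebraMap (Polynomial ℝ) (RatFunc ℝ) (Polynomial.X * g.denom) := by
  conv_lhs => rw [← RatFunc.num_div_denom g]
  rw [div_mul_div_comm, _root_.map_mul, _root_.map_mul, RatFunc.algebraMap_C, RatFunc.algebraMap_X]

private lemma key_cross (ω₀ : ℝ) (g : RatFunc ℝ) :
    (RatFunc.C ω₀ / RatFunc.X * g).num * (Polynomial.X * g.denom)
      = (Polynomial.C ω₀ * g.num) * (RatFunc.C ω₀ / RatFunc.X * g).denom :=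
  (RatFunc.num_mul_eq_mul_denom_iff
    (mul_ne_zero Polynomial.X_ne_zero g.denom_ne_zero)).mpr (ratfunc_rep ω₀ g)

private lemma denom_dvd' (ω₀ : ℝ) (g : RatFunc ℝ) :
    (RatFunc.C ω₀ / RatFunc.X * g).denom ∣ Polynomial.X * g.denom :=
  (RatFunc.denom_dvd (mul_ne_zero Polynomial.X_ne_zero g.denom_ne_zero)).mpr
    ⟨Polynomial.C ω₀ * g.num, ratfunc_rep ω₀ g⟩

private lemma denom_eval_ne (ω₀ : ℝ) (g : RatFunc ℝ) {s : ℂ} (hs : s ≠ 0)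
    (hg : g.denom.eval₂ (algebraMap ℝ ℂ) s ≠ 0) :
    (RatFunc.C ω₀ / RatFunc.X * g).denom.eval₂ (algebraMap ℝ ℂ) s ≠ 0 := by
  obtain ⟨h, hh⟩ := denom_dvd' ω₀ g
  intro h0
  apply mul_ne_zero hs hg
  have := congrArg (Polynomial.eval₂ (algebraMap ℝ ℂ) s) hh
  rw [Polynomial.eval₂_mul, Polynomial.eval₂_mul, Polynomial.eval₂_X, h0, zero_mul] at this
  exact this

private lemma evalC_eq (f : RatFunc ℝ) (s : ℂ) :
    evalC f s = (Polynomial.aeval s) f.num / (Polynomial.aeval s) f.denom := by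
  simp [evalC, RatFunc.eval, Polynomial.aeval_def]

private lemma eval_formula (ω₀ : ℝ) (g : RatFunc ℝ) {s : ℂ} (hs : s ≠ 0)
    (hg : g.denom.eval₂ (algebraMap ℝ ℂ) s ≠ 0) :
    evalC (RatFunc.C ω₀ / RatFunc.X * g) s = ((ω₀ : ℂ) / s) * evalC g s := by
  have hd := denom_eval_ne ω₀ g hs hg
  have hk := congrArg (Polynomial.eval₂ (algebraMap ℝ ℂ) s) (key_cross ω₀ g)
  simp only [Polynomial.eval₂_mul, Polynomial.eval₂_X, Polynomial.eval₂_C] at hk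
  rw [evalC_eq, evalC_eq]
  simp only [Polynomial.aeval_def, Complex.coe_algebraMap] at *
  generalize hu : RatFunc.C ω₀ / RatFunc.X * g = u at hk hd ⊢
  have hgd : Polynomial.eval₂ (algebraMap ℝ ℂ) s g.denom ≠ 0 := hg
  field_simp
  linear_combination hk

private lemma strict_deg (ω₀ : ℝ) (hω₀ : ω₀ ≠ 0) (g : RatFunc ℝ)
    (hg : g.num.degree ≤ g.denom.degree) :
    (RatFunc.C ω₀ / RatFunc.X * g).num.degree
      < (RatFunc.C ω₀ / RatFunc.X * g).denom.degree := by
  by_cases h0 : g = 0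
  · simp [h0, Polynomial.degree_zero, Polynomial.degree_one]
  · have hC : RatFunc.C ω₀ ≠ 0 := by
      rw [← RatFunc.algebraMap_C]
      exact RatFunc.algebraMap_ne_zero (Polynomial.C_ne_zero.mpr hω₀)
    have hX : (RatFunc.X : RatFunc ℝ) ≠ 0 := by
      rw [← RatFunc.algebraMap_X]
      exact RatFunc.algebraMap_ne_zero Polynomial.X_ne_zero
    have hfne : RatFunc.C ω₀ / RatFunc.X * g ≠ 0 :=
      mul_ne_zero (div_ne_zero hC hX) h0
    have hnum := RatFunc.num_ne_zero hfne
    have hgnum := RatFunc.num_ne_zero h0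
    have h := congrArg Polynomial.natDegree (key_cross ω₀ g)
    rw [Polynomial.natDegree_mul hnum (mul_ne_zero Polynomial.X_ne_zero g.denom_ne_zero),
      Polynomial.natDegree_mul Polynomial.X_ne_zero g.denom_ne_zero,
      Polynomial.natDegree_mul (mul_ne_zero (Polynomial.C_ne_zero.mpr hω₀) hgnum)
        (RatFunc.C ω₀ / RatFunc.X * g).denom_ne_zero,
      Polynomial.natDegree_mul (Polynomial.C_ne_zero.mpr hω₀) hgnum,
      Polynomial.natDegree_X, Polynomial.natDegree_C] at h
    have hle : g.num.natDegree ≤ g.denom.natDegree := Polynomial.natDegree_le_natDegree hg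
    apply Polynomial.degree_lt_degree
    omega

private lemma psd_real_smul {m : ℕ} {A : Matrix (Fin m) (Fin m) ℂ} (hA : A.PosSemidef)
    {r : ℝ} (hr : 0 ≤ r) : ((r : ℂ) • A).PosSemidef := by
  constructor
  · unfold Matrix.IsHermitian
    rw [Matrix.conjTranspose_smul, hA.1]
    congr 1
    simp [Complex.conj_ofReal]
  · intro x
    have h := mul_nonneg (Complex.zero_le_real.mpr hr) (hA.2 x)
    refine le_of_le_of_eq h ?_
    simp only [Finsupp.mul_sum, Matrix.smul_apply, smul_eq_mul]
    exact Finsupp.sum_congr fun i _ => Finsupp.sum_congr fun j _ => by ring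

private lemma aeval_cont (p : Polynomial ℝ) :
    Continuous fun s : ℂ => Polynomial.eval₂ (algebraMap ℝ ℂ) s p := by
  simp only [← Polynomial.aeval_def]
  exact p.continuous_aeval

/-- Near `0`, the denominators of entries of a matrix with no pole at `0` stay nonzero. -/
private lemma eventually_denoms_ne {m : ℕ} (N : Matrix (Fin m) (Fin m) (RatFunc ℝ))
    (hden : ∀ i j, (N i j).denom.eval₂ (algebraMap ℝ ℂ) 0 ≠ 0) :
    ∀ᶠ s : ℂ in 𝓝 0, ∀ i j, (N i j).denom.eval₂ (algebraMap ℝ ℂ) s ≠ 0 := by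
  rw [eventually_all]
  intro i
  rw [eventually_all]
  intro j
  exact (aeval_cont (N i j).denom).continuousAt.eventually_ne (hden i j)

private lemma tendsto_evalM {m : ℕ} (N : Matrix (Fin m) (Fin m) (RatFunc ℝ))
    (hden : ∀ i j, (N i j).denom.eval₂ (algebraMap ℝ ℂ) 0 ≠ 0) :
    Tendsto (evalM N) (𝓝 0) (𝓝 (evalM N 0)) := by
  apply tendsto_pi_nhds.2
  intro i
  rw [tendsto_pi_nhds]
  intro j
  have : ∀ s, evalM N s i j = Polynomial.eval₂ (algebraMap ℝ ℂ) s (N i j).num /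
      Polynomial.eval₂ (algebraMap ℝ ℂ) s (N i j).denom := by
    intro s
    simp [evalM, evalC_eq, Polynomial.aeval_def]
  simp only [this]
  exact ((aeval_cont _).tendsto 0).div ((aeval_cont _).tendsto 0) (hden i j)

private lemma evalMP_eq {m : ℕ} (ω₀ : ℝ) (N : Matrix (Fin m) (Fin m) (RatFunc ℝ)) {s : ℂ}
    (hs : s ≠ 0) (hden : ∀ i j, (N i j).denom.eval₂ (algebraMap ℝ ℂ) s ≠ 0) :
    evalM (Matrix.of fun i j => RatFunc.C ω₀ / RatFunc.X * N i j) s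
      = ((ω₀ : ℂ) / s) • evalM N s := by
  ext i j
  rw [Matrix.smul_apply, smul_eq_mul]
  show evalC (RatFunc.C ω₀ / RatFunc.X * N i j) s = _ * evalC (N i j) s
  exact eval_formula ω₀ (N i j) hs (hden i j)

private lemma tendsto_pow_main {m : ℕ} (ω₀ : ℝ) (N : Matrix (Fin m) (Fin m) (RatFunc ℝ))
    (hden : ∀ i j, (N i j).denom.eval₂ (algebraMap ℝ ℂ) 0 ≠ 0) (k : ℕ) (hk : 2 ≤ k) :
    Tendsto (fun s : ℂ =>
        s ^ k • evalM (Matrix.of fun i j => RatFunc.C ω₀ / RatFunc.X * N i j) s)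
      (𝓝[≠] (0 : ℂ)) (𝓝 0) := by
  have hev : ∀ᶠ s : ℂ in 𝓝[≠] (0 : ℂ),
      (s ^ (k - 1) * (ω₀ : ℂ)) • evalM N s
        = s ^ k • evalM (Matrix.of fun i j => RatFunc.C ω₀ / RatFunc.X * N i j) s := by
    filter_upwards [nhdsWithin_le_nhds (eventually_denoms_ne N hden), self_mem_nhdsWithin]
      with s hs hs0
    have hs0' : s ≠ 0 := hs0
    rw [evalMP_eq ω₀ N hs0' hs, smul_smul]
    congr 1
    have hsk : s ^ k = s ^ (k - 1) * s := by
      rw [← pow_succ]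
      congr 1
      omega
    rw [hsk]
    field_simp
  refine Tendsto.congr' hev ?_
  have h1 : Tendsto (fun s : ℂ => s ^ (k - 1) * (ω₀ : ℂ)) (𝓝[≠] (0 : ℂ)) (𝓝 0) := by
    have := (((continuous_pow (k - 1)).tendsto (0 : ℂ)).mul
      (tendsto_const_nhds (x := (ω₀ : ℂ)))).mono_left
      (nhdsWithin_le_nhds (s := {(0 : ℂ)}ᶜ))
    simpa [zero_pow (show k - 1 ≠ 0 by omega)] using this
  have h2 := (tendsto_evalM N hden).mono_left (nhdsWithin_le_nhds (s := {(0 : ℂ)}ᶜ))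
  simpa using h1.smul h2

/-- `(ω₀ / s) N(s)` is NI with zero instantaneous gain whenever
`N` is positive real. -/
theorem positive_real_over_s_is_NI {n : ℕ} (N : Matrix (Fin n) (Fin n) (RatFunc ℝ))
    (hN : IsPositiveReal N) (ω₀ : ℝ) (hω₀ : 0 < ω₀) :
    let P : Matrix (Fin n) (Fin n) (RatFunc ℝ) :=
      Matrix.of fun i j => (RatFunc.C ω₀ / RatFunc.X) * N i j
    IsNI P ∧ evalInf P = 0 := by
  intro P
  have hP : ∀ i j, P i j = RatFunc.C ω₀ / RatFunc.X * N i j := fun i j => rfl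
  obtain ⟨⟨hprop, hpoles⟩, hpass⟩ := hN
  have hω₀' : ω₀ ≠ 0 := ne_of_gt hω₀
  have hden : ∀ s : ℂ, 0 ≤ s.re → ∀ i j,
      (N i j).denom.eval₂ (algebraMap ℝ ℂ) s ≠ 0 := fun s hs i j => hpoles s hs i j
  constructor
  · refine ⟨?_, ?_, ?_, ?_, ?_⟩
    · -- Proper
      intro i j
      rw [hP]
      exact le_of_lt (strict_deg ω₀ hω₀' _ (hprop i j))
    · -- no open-RHP poles
      rintro s hs ⟨i, j, hp⟩
      rw [hP] at hp
      have hs0 : s ≠ 0 := fun h => by simp [h] at hs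
      exact denom_eval_ne ω₀ _ hs0 (hden s hs.le i j) hp
    · -- frequency-domain NI condition
      intro ω hω _
      have hωc : (ω : ℂ) ≠ 0 := Complex.ofReal_ne_zero.mpr hω.ne'
      have hsne : jw ω ≠ 0 := mul_ne_zero Complex.I_ne_zero hωc
      have hre : (jw ω).re = 0 := by simp [jw]
      have hd : ∀ i j, (N i j).denom.eval₂ (algebraMap ℝ ℂ) (jw ω) ≠ 0 :=
        fun i j => hden (jw ω) (le_of_eq hre.symm) i j
      have hEP : evalM P (jw ω) = ((ω₀ : ℂ) / jw ω) • evalM N (jw ω) :=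
        evalMP_eq ω₀ N hsne hd
      have hkey : niKer (evalM P (jw ω))
          = ((ω₀ / ω : ℝ) : ℂ) • (evalM N (jw ω) + (evalM N (jw ω))ᴴ) := by
        rw [hEP]
        unfold niKer
        ext i j
        simp only [Matrix.smul_apply, Matrix.sub_apply, Matrix.add_apply,
          Matrix.conjTranspose_apply, smul_eq_mul, jw, _root_.map_mul, map_div₀,
          Complex.conj_ofReal, Complex.conj_I, Complex.ofReal_div, Complex.star_def, map_inv₀]
        field_simp
        ring_nf
      rw [hkey]
      exact psd_real_smul (hpass ω hω.le) (div_nonneg hω₀.le hω.le)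
    · -- no purely imaginary poles with ω > 0
      intro ω hω hpole
      exfalso
      obtain ⟨i, j, hp⟩ := hpole
      rw [hP] at hp
      have hωc : (ω : ℂ) ≠ 0 := Complex.ofReal_ne_zero.mpr hω.ne'
      have hsne : jw ω ≠ 0 := mul_ne_zero Complex.I_ne_zero hωc
      have hre : (jw ω).re = 0 := by simp [jw]
      exact denom_eval_ne ω₀ _ hsne (hden (jw ω) (le_of_eq hre.symm) i j) hp
    · -- behaviour at the origin
      intro _
      have hd0 : ∀ i j, (N i j).denom.eval₂ (algebraMap ℝ ℂ) 0 ≠ 0 :=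
        fun i j => hden 0 (by simp) i j
      constructor
      · intro k hk
        exact tendsto_pow_main ω₀ N hd0 k (by omega)
      · exact ⟨0, Matrix.PosSemidef.zero, tendsto_pow_main ω₀ N hd0 2 le_rfl⟩
  · -- zero instantaneous gain
    ext i j
    show atInfinity (P i j) = 0
    rw [hP, atInfinity, if_neg (ne_of_lt (strict_deg ω₀ hω₀' _ (hprop i j)))]


end NIControl
end
end

section
/- Let ω₀ > 0 and let α, β ∈ ℝⁿ. Define the polynomial vector p(s) = αs + β and the n×n real-rational transfer matrix G(s) = p(s) p(−s)^T / (s² + ω₀²). Then G is negative imaginary (NI); in particular j(G(jω) − G(jω)*) = 0 for all ω ∈ (0,∞) with ω ≠ ω₀, and lim_{s→jω₀} (s − jω₀) j G(s) = (1/(2ω₀)) p(jω₀) p(jω₀)* ≥ 0. -/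
open Matrix Polynomial Filter Topology
open scoped ComplexOrder

noncomputable section

namespace NIControl

variable {n : ℕ}

private def Dp (ω₀ : ℝ) : Polynomial ℝ := X ^ 2 + C (ω₀ ^ 2)

private lemma Dp_monic (ω₀ : ℝ) : (Dp ω₀).Monic := monic_X_pow_add_C _ two_ne_zero
private lemma Dp_ne_zero (ω₀ : ℝ) : Dp ω₀ ≠ 0 := (Dp_monic ω₀).ne_zero
private lemma Dp_natDegree (ω₀ : ℝ) : (Dp ω₀).natDegree = 2 := by
  unfold Dp; exact natDegree_X_pow_add_C

private lemma evalD (ω₀ : ℝ) (s : ℂ) :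
    (Dp ω₀).eval₂ (algebraMap ℝ ℂ) s = s ^ 2 + (ω₀ : ℂ) ^ 2 := by
  simp [Dp, Complex.coe_algebraMap]

private lemma factorD (ω₀ : ℝ) (s : ℂ) :
    s ^ 2 + (ω₀ : ℂ) ^ 2 = (s - Complex.I * ω₀) * (s + Complex.I * ω₀) := by
  linear_combination (ω₀ : ℂ) ^ 2 * Complex.I_sq

/-- The rational function `N / (X² + ω₀²)`. -/
private def fr (ω₀ : ℝ) (N : Polynomial ℝ) : RatFunc ℝ :=
  algebraMap (Polynomial ℝ) (RatFunc ℝ) N / algebraMap (Polynomial ℝ) (RatFunc ℝ) (Dp ω₀)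

private lemma cross (ω₀ : ℝ) (N : Polynomial ℝ) :
    (fr ω₀ N).num * Dp ω₀ = N * (fr ω₀ N).denom :=
  (RatFunc.num_mul_eq_mul_denom_iff (Dp_ne_zero ω₀)).mpr rfl

private lemma denom_dvd (ω₀ : ℝ) (N : Polynomial ℝ) : (fr ω₀ N).denom ∣ Dp ω₀ :=
  RatFunc.denom_div_dvd N (Dp ω₀)

private lemma denom_eval_ne_s17 {ω₀ : ℝ} {s : ℂ} (hs : s ^ 2 + (ω₀ : ℂ) ^ 2 ≠ 0)
    (N : Polynomial ℝ) : (fr ω₀ N).denom.eval₂ (algebraMap ℝ ℂ) s ≠ 0 := by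
  obtain ⟨e, he⟩ := denom_dvd ω₀ N
  intro h0
  apply hs
  rw [← evalD ω₀ s, he, Polynomial.eval₂_mul, h0, zero_mul]

private lemma eval_fr {ω₀ : ℝ} {s : ℂ} (hs : s ^ 2 + (ω₀ : ℂ) ^ 2 ≠ 0) (N : Polynomial ℝ) :
    evalC (fr ω₀ N) s = N.eval₂ (algebraMap ℝ ℂ) s / (s ^ 2 + (ω₀ : ℂ) ^ 2) := by
  have hd := denom_eval_ne_s17 hs N
  have hc := congrArg (Polynomial.eval₂ (algebraMap ℝ ℂ) s) (cross ω₀ N)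
  rw [Polynomial.eval₂_mul, Polynomial.eval₂_mul, evalD] at hc
  show (fr ω₀ N).num.eval₂ _ s / (fr ω₀ N).denom.eval₂ _ s = _
  field_simp
  linear_combination hc

private lemma proper_fr (ω₀ : ℝ) (N : Polynomial ℝ) (hN : N.natDegree ≤ 2) :
    (fr ω₀ N).num.degree ≤ (fr ω₀ N).denom.degree := by
  by_cases h0 : (fr ω₀ N).num = 0
  · simp [h0]
  have hN0 : N ≠ 0 := by
    intro h
    apply h0
    rw [h]
    simp [fr]
  have hd := congrArg Polynomial.natDegree (cross ω₀ N)
  rw [Polynomial.natDegree_mul h0 (Dp_ne_zero ω₀),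
    Polynomial.natDegree_mul hN0 (RatFunc.denom_ne_zero _), Dp_natDegree] at hd
  have hle : (fr ω₀ N).num.natDegree ≤ (fr ω₀ N).denom.natDegree := by omega
  rw [Polynomial.degree_eq_natDegree h0,
    Polynomial.degree_eq_natDegree (RatFunc.denom_ne_zero _)]
  exact_mod_cast hle


private lemma jw_sq (ω₀ ω : ℝ) :
    (jw ω) ^ 2 + (ω₀ : ℂ) ^ 2 = ((ω₀ ^ 2 - ω ^ 2 : ℝ) : ℂ) := by
  unfold jw
  push_cast
  linear_combination (ω : ℂ) ^ 2 * Complex.I_sq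

private lemma Dval_jw_ne {ω₀ ω : ℝ} (h1 : ω ≠ ω₀) (h2 : ω ≠ -ω₀) :
    (jw ω) ^ 2 + (ω₀ : ℂ) ^ 2 ≠ 0 := by
  rw [jw_sq]
  norm_cast
  intro h
  rcases mul_eq_zero.mp (show (ω₀ - ω) * (ω₀ + ω) = 0 by nlinarith) with h' | h'
  · exact h1 (by linarith)
  · exact h2 (by linarith)

private lemma const_of_no_pole {ω₀ : ℝ} (hω₀ : 0 < ω₀) (N : Polynomial ℝ)
    (hN : N.natDegree ≤ 2) (h : ¬ IsPoleAt (fr ω₀ N) (jw ω₀)) :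
    ∀ s t : ℂ, evalC (fr ω₀ N) s = evalC (fr ω₀ N) t := by
  obtain ⟨e, he⟩ := denom_dvd ω₀ N
  have hDval : (Dp ω₀).eval₂ (algebraMap ℝ ℂ) (jw ω₀) = 0 := by
    rw [evalD, jw_sq]
    norm_num
  have hdenom0 : (fr ω₀ N).denom.natDegree = 0 := by
    by_contra hd
    have he0 : e ≠ 0 := by
      intro h'
      exact Dp_ne_zero ω₀ (by rw [he, h', mul_zero])
    have hsum : (fr ω₀ N).denom.natDegree + e.natDegree = 2 := by
      rw [← Polynomial.natDegree_mul (RatFunc.denom_ne_zero _) he0, ← he, Dp_natDegree]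
    have hele : e.natDegree ≤ 1 := by omega
    have heval : e.eval₂ (algebraMap ℝ ℂ) (jw ω₀) = 0 := by
      have hc := congrArg (Polynomial.eval₂ (algebraMap ℝ ℂ) (jw ω₀)) he
      rw [Polynomial.eval₂_mul, hDval] at hc
      rcases mul_eq_zero.mp hc.symm with h' | h'
      · exact absurd h' h
      · exact h'
    have heq := Polynomial.eq_X_add_C_of_natDegree_le_one hele
    rw [heq] at heval
    simp only [Polynomial.eval₂_add, Polynomial.eval₂_mul, Polynomial.eval₂_C,
      Polynomial.eval₂_X, Complex.coe_algebraMap, jw] at heval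
    have him : e.coeff 1 * ω₀ = 0 := by
      have := congrArg Complex.im heval
      simpa using this
    have h1 : e.coeff 1 = 0 := by
      rcases mul_eq_zero.mp him with h' | h'
      · exact h'
      · exact absurd h' (ne_of_gt hω₀)
    have h0 : e.coeff 0 = 0 := by
      have := congrArg Complex.re heval
      simpa [h1] using this
    exact he0 (by rw [heq, h1, h0]; simp)
  have hd1 : (fr ω₀ N).denom = 1 :=
    (Polynomial.Monic.natDegree_eq_zero (RatFunc.monic_denom _)).mp hdenom0
  have hnum := proper_fr ω₀ N hN
  rw [hd1, Polynomial.degree_one] at hnum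
  have hnumC := Polynomial.eq_C_of_degree_le_zero hnum
  intro s t
  show (fr ω₀ N).num.eval₂ _ s / (fr ω₀ N).denom.eval₂ _ s =
    (fr ω₀ N).num.eval₂ _ t / (fr ω₀ N).denom.eval₂ _ t
  rw [hd1, hnumC]
  simp


private lemma evalP (a b : ℝ) (s : ℂ) :
    (C a * X + C b : Polynomial ℝ).eval₂ (algebraMap ℝ ℂ) s = a * s + b := by
  simp

private lemma eval_comp_neg (q : Polynomial ℝ) (s : ℂ) :
    (q.comp (-X)).eval₂ (algebraMap ℝ ℂ) s = q.eval₂ (algebraMap ℝ ℂ) (-s) := by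
  rw [Polynomial.eval₂_comp']
  simp

private lemma natDeg_prod (a b a' b' : ℝ) :
    ((C a * X + C b) * ((C a' * X + C b').comp (-X)) : Polynomial ℝ).natDegree ≤ 2 := by
  refine (Polynomial.natDegree_mul_le).trans ?_
  have h1 : (C a * X + C b : Polynomial ℝ).natDegree ≤ 1 := natDegree_linear_le
  have h2 : ((C a' * X + C b').comp (-X) : Polynomial ℝ).natDegree ≤ 1 := by
    refine (Polynomial.natDegree_comp_le).trans ?_
    have : (-X : Polynomial ℝ).natDegree ≤ 1 := by
      simpa using Polynomial.natDegree_X_le (R := ℝ)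
    calc (C a' * X + C b' : Polynomial ℝ).natDegree * (-X : Polynomial ℝ).natDegree
        ≤ 1 * 1 := Nat.mul_le_mul natDegree_linear_le this
      _ = 1 := by norm_num
  omega


/-- the dyadic transfer matrix `p(s) p(−s)ᵀ / (s² + ω₀²)` is NI,
with vanishing NI kernel away from `ω₀` and PSD residue at `jω₀`. -/
theorem dyadic_resonant_transfer_matrix_is_NI {n : ℕ} (ω₀ : ℝ) (hω₀ : 0 < ω₀)
    (α β : Fin n → ℝ) :
    let p : Fin n → Polynomial ℝ :=
      fun i => Polynomial.C (α i) * Polynomial.X + Polynomial.C (β i)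
    let G : Matrix (Fin n) (Fin n) (RatFunc ℝ) :=
      Matrix.of fun i j =>
        algebraMap (Polynomial ℝ) (RatFunc ℝ) (p i * (p j).comp (-Polynomial.X)) /
          algebraMap (Polynomial ℝ) (RatFunc ℝ) (Polynomial.X ^ 2 + Polynomial.C (ω₀ ^ 2))
    let pc : Fin n → ℂ := fun i => (α i : ℂ) * jw ω₀ + (β i : ℂ)
    IsNI G ∧
    (∀ ω : ℝ, 0 < ω → ω ≠ ω₀ → niKer (evalM G (jw ω)) = 0) ∧
    Filter.Tendsto (fun s : ℂ => (s - jw ω₀) • Complex.I • evalM G s) (𝓝[≠] jw ω₀)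
      (𝓝 ((2 * (ω₀ : ℂ))⁻¹ • Matrix.vecMulVec pc (star pc))) ∧
    ((2 * (ω₀ : ℂ))⁻¹ • Matrix.vecMulVec pc (star pc)).PosSemidef := by
  intro p G pc
  have hG : ∀ i j, G i j = fr ω₀ (p i * (p j).comp (-X)) := fun i j => rfl
  have h2ω : (2 * (ω₀ : ℂ)) ≠ 0 := by
    exact_mod_cast (by positivity : (2 * ω₀ : ℝ) ≠ 0)
  set q : Fin n → ℂ → ℂ := fun i s => (α i : ℂ) * s + (β i : ℂ) with hq
  have hNd : ∀ i j, (p i * (p j).comp (-X)).natDegree ≤ 2 := fun i j => natDeg_prod _ _ _ _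
  have hNeval : ∀ (i j) (s : ℂ),
      (p i * (p j).comp (-X)).eval₂ (algebraMap ℝ ℂ) s = q i s * q j (-s) := by
    intro i j s
    rw [Polynomial.eval₂_mul, eval_comp_neg, evalP, evalP]
  have hENT : ∀ (i j) (s : ℂ), s ^ 2 + (ω₀ : ℂ) ^ 2 ≠ 0 →
      evalC (G i j) s = q i s * q j (-s) / (s ^ 2 + (ω₀ : ℂ) ^ 2) := by
    intro i j s hs
    rw [hG i j, eval_fr hs, hNeval]
  have hnopole : ∀ s : ℂ, s ^ 2 + (ω₀ : ℂ) ^ 2 ≠ 0 → ¬ HasPole G s := by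
    rintro s hs ⟨i, j, hij⟩
    rw [hG i j] at hij
    exact denom_eval_ne_s17 hs _ hij
  have hproper : Proper G := by
    intro i j
    rw [hG i j]
    exact proper_fr _ _ (hNd i j)
  have hherm' : ∀ ω : ℝ, (jw ω) ^ 2 + (ω₀ : ℂ) ^ 2 ≠ 0 →
      (evalM G (jw ω))ᴴ = evalM G (jw ω) := by
    intro ω hs
    ext i j
    rw [Matrix.conjTranspose_apply]
    show star (evalC (G j i) (jw ω)) = evalC (G i j) (jw ω)
    rw [hENT j i _ hs, hENT i j _ hs]
    simp only [hq, jw, Complex.star_def, map_div₀, _root_.map_mul, _root_.map_add, _root_.map_pow, _root_.map_neg,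
      Complex.conj_ofReal, Complex.conj_I]
    ring
  have hherm : ∀ ω : ℝ, 0 < ω → ¬ HasPole G (jw ω) →
      (evalM G (jw ω))ᴴ = evalM G (jw ω) := by
    intro ω hω hnp
    by_cases hcase : ω = ω₀
    · subst hcase
      simp only [HasPole, not_exists] at hnp
      have hconst : evalM G (jw ω) = evalM G (jw (2 * ω)) := by
        ext i j
        show evalC (G i j) (jw ω) = evalC (G i j) (jw (2 * ω))
        rw [hG i j]
        exact const_of_no_pole hω₀ _ (hNd i j) (by rw [← hG i j]; exact hnp i j) _ _
      rw [hconst]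
      exact hherm' _ (Dval_jw_ne (by linarith) (by linarith))
    · exact hherm' _ (Dval_jw_ne hcase (by linarith))
  have hstar : ∀ k, star (pc k) = q k (-(jw ω₀)) := by
    intro k
    show star ((α k : ℂ) * (Complex.I * (ω₀ : ℂ)) + (β k : ℂ))
      = (α k : ℂ) * (-(Complex.I * (ω₀ : ℂ))) + (β k : ℂ)
    simp only [Complex.star_def, _root_.map_add, _root_.map_mul, Complex.conj_ofReal,
      Complex.conj_I]
    ring
  have hRentry : ∀ i j, ((2 * (ω₀ : ℂ))⁻¹ • vecMulVec pc (star pc)) i j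
      = (2 * (ω₀ : ℂ))⁻¹ * (q i (jw ω₀) * q j (-(jw ω₀))) := by
    intro i j
    rw [Matrix.smul_apply, vecMulVec_apply, smul_eq_mul, Pi.star_apply, hstar j]
  have key : ∀ i j, Tendsto (fun s : ℂ => ((s - jw ω₀) • Complex.I • evalM G s) i j)
      (𝓝[≠] jw ω₀) (𝓝 (((2 * (ω₀ : ℂ))⁻¹ • vecMulVec pc (star pc)) i j)) := by
    intro i j
    have hne2 : (jw ω₀ : ℂ) + Complex.I * ω₀ ≠ 0 := by
      show Complex.I * (ω₀ : ℂ) + Complex.I * ω₀ ≠ 0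
      have h : Complex.I * (ω₀ : ℂ) + Complex.I * ω₀ = Complex.I * (2 * ω₀) := by ring
      rw [h]
      exact mul_ne_zero Complex.I_ne_zero h2ω
    have hcont : Tendsto (fun s : ℂ => Complex.I * (q i s * q j (-s)) / (s + Complex.I * ω₀))
        (𝓝 (jw ω₀))
        (𝓝 (Complex.I * (q i (jw ω₀) * q j (-(jw ω₀))) / (jw ω₀ + Complex.I * ω₀))) := by
      apply Filter.Tendsto.div
      · apply Continuous.tendsto
        simp only [hq]
        fun_prop
      · apply Continuous.tendsto
        fun_prop
      · exact hne2
    have hval : Complex.I * (q i (jw ω₀) * q j (-(jw ω₀))) / (jw ω₀ + Complex.I * ω₀)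
        = ((2 * (ω₀ : ℂ))⁻¹ • vecMulVec pc (star pc)) i j := by
      rw [hRentry]
      have h : (jw ω₀ : ℂ) + Complex.I * ω₀ = Complex.I * (2 * ω₀) := by
        show Complex.I * (ω₀ : ℂ) + Complex.I * ω₀ = _
        ring
      rw [h]
      field_simp
    have hev : (fun s : ℂ => Complex.I * (q i s * q j (-s)) / (s + Complex.I * ω₀))
        =ᶠ[𝓝[≠] jw ω₀] (fun s : ℂ => ((s - jw ω₀) • Complex.I • evalM G s) i j) := by
      have h1 : ∀ᶠ s : ℂ in 𝓝[≠] jw ω₀, s ≠ -(Complex.I * ω₀) := by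
        apply eventually_nhdsWithin_of_eventually_nhds
        apply eventually_ne_nhds
        intro h
        exact hne2 (by rw [h]; ring)
      filter_upwards [h1, self_mem_nhdsWithin] with s hs1 hs2
      have hsub : s - Complex.I * ω₀ ≠ 0 := sub_ne_zero.mpr hs2
      have hadd : s + Complex.I * ω₀ ≠ 0 := fun h => hs1 (eq_neg_of_add_eq_zero_left h)
      have hs0 : s ^ 2 + (ω₀ : ℂ) ^ 2 ≠ 0 := by
        rw [factorD]
        exact mul_ne_zero hsub hadd
      have hrhs : ((s - jw ω₀) • Complex.I • evalM G s) i j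
          = (s - jw ω₀) * (Complex.I * evalC (G i j) s) := by
        rw [Matrix.smul_apply, Matrix.smul_apply, smul_eq_mul, smul_eq_mul]
        rfl
      rw [hrhs, hENT i j s hs0, factorD]
      show _ = (s - Complex.I * ω₀) * _
      field_simp
    exact ((hval ▸ hcont).mono_left nhdsWithin_le_nhds).congr' hev
  have hres : Tendsto (fun s : ℂ => (s - jw ω₀) • Complex.I • evalM G s) (𝓝[≠] jw ω₀)
      (𝓝 ((2 * (ω₀ : ℂ))⁻¹ • vecMulVec pc (star pc))) :=
    tendsto_pi_nhds.mpr fun i => tendsto_pi_nhds.mpr fun j => key i j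
  have hpsd : ((2 * (ω₀ : ℂ))⁻¹ • vecMulVec pc (star pc)).PosSemidef := by
    set c : ℝ := (Real.sqrt (2 * ω₀))⁻¹ with hc
    have hcc : (c : ℂ) * (c : ℂ) = (2 * (ω₀ : ℂ))⁻¹ := by
      have h1 : Real.sqrt (2 * ω₀) * Real.sqrt (2 * ω₀) = 2 * ω₀ :=
        Real.mul_self_sqrt (by positivity)
      have h2 : c * c = (2 * ω₀)⁻¹ := by rw [hc, ← mul_inv, h1]
      calc (c : ℂ) * (c : ℂ) = ((c * c : ℝ) : ℂ) := by push_cast; ring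
        _ = (((2 * ω₀)⁻¹ : ℝ) : ℂ) := by rw [h2]
        _ = (2 * (ω₀ : ℂ))⁻¹ := by push_cast; ring
    have hBB : (2 * (ω₀ : ℂ))⁻¹ • vecMulVec pc (star pc)
        = (Matrix.of fun i (_ : Fin 1) => (c : ℂ) * pc i) *
          (Matrix.of fun i (_ : Fin 1) => (c : ℂ) * pc i)ᴴ := by
      ext i j
      rw [Matrix.smul_apply, vecMulVec_apply, smul_eq_mul, Matrix.mul_apply]
      simp only [Fin.sum_univ_one, Matrix.conjTranspose_apply, Matrix.of_apply]
      rw [Pi.star_apply, star_mul', ← hcc]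
      have hsc : star ((c : ℂ)) = (c : ℂ) := by rw [Complex.star_def, Complex.conj_ofReal]
      rw [hsc]
      ring
    rw [hBB]
    exact Matrix.posSemidef_self_mul_conjTranspose _
  refine ⟨⟨hproper, ?_, ?_, ?_, ?_⟩, ?_, hres, hpsd⟩
  · -- no poles in ORHP
    intro s hsre
    apply hnopole
    rw [factorD]
    apply mul_ne_zero
    · intro h
      rw [sub_eq_zero] at h
      rw [h] at hsre
      simp at hsre
    · intro h
      rw [eq_neg_of_add_eq_zero_left h] at hsre
      simp at hsre
  · -- NI kernel PSD at non-poles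
    intro ω hω hnp
    rw [niKer, hherm ω hω hnp, sub_self, smul_zero]
    exact Matrix.PosSemidef.zero
  · -- residue at poles
    intro ω hω hpole
    obtain ⟨i, j, hij⟩ := hpole
    have hval0 : (jw ω) ^ 2 + (ω₀ : ℂ) ^ 2 = 0 := by
      by_contra hs
      rw [hG i j] at hij
      exact denom_eval_ne_s17 hs _ hij
    have hωeq : ω = ω₀ := by
      rw [jw_sq] at hval0
      norm_cast at hval0
      have h' : (ω - ω₀) * (ω + ω₀) = 0 := by nlinarith
      rcases mul_eq_zero.mp h' with h'' | h''
      · linarith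
      · linarith
    subst hωeq
    exact ⟨_, hpsd, hres⟩
  · -- no pole at origin
    intro h0
    exfalso
    apply hnopole 0 ?_ h0
    have h : ((0 : ℂ)) ^ 2 + (ω₀ : ℂ) ^ 2 = ((ω₀ ^ 2 : ℝ) : ℂ) := by push_cast; ring
    rw [h]
    exact_mod_cast pow_ne_zero 2 (ne_of_gt hω₀)
  · -- NI kernel vanishes away from resonance
    intro ω hω hne
    rw [niKer, hherm' ω (Dval_jw_ne hne (by intro h; rw [h] at hω; linarith)), sub_self,
      smul_zero]


end NIControl
end
end

section
/- Let A, B, D ∈ ℝ^{n×n} with A = A^T ≥ 0 (symmetric positive semidefinite), B = B^T, D = D^T, and D ≤ B (i.e. B − D positive semidefinite). If the largest eigenvalue of AB is less than 1, then the largest eigenvalue of AD is less than 1. -/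
open Matrix Polynomial Filter Topology
open scoped ComplexOrder

noncomputable section

namespace NIControl

variable {n : ℕ}

section AuxMaxEig

variable {n : ℕ}

lemma mapC_mul (M N : Matrix (Fin n) (Fin n) ℝ) :
    (M * N).map Complex.ofReal = M.map Complex.ofReal * N.map Complex.ofReal := by
  ext i j
  simp [Matrix.mul_apply]

lemma mapC_sub (M N : Matrix (Fin n) (Fin n) ℝ) :
    (M - N).map Complex.ofReal = M.map Complex.ofReal - N.map Complex.ofReal := by
  ext i j
  simp

lemma mapC_conjTranspose (M : Matrix (Fin n) (Fin n) ℝ) :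
    (M.map Complex.ofReal)ᴴ = Mᵀ.map Complex.ofReal := by
  ext i j
  simp [conjTranspose_apply]

lemma herm_map {M : Matrix (Fin n) (Fin n) ℝ} (hM : M.IsHermitian) :
    (M.map (Complex.ofReal)).IsHermitian := by
  have h : Mᵀ = M := hM
  rw [Matrix.IsHermitian, mapC_conjTranspose, h]

open scoped MatrixOrder in
lemma exists_sqrt_psd {A : Matrix (Fin n) (Fin n) ℝ} (hA : A.PosSemidef) :
    ∃ S : Matrix (Fin n) (Fin n) ℝ, S.PosSemidef ∧ S * S = A :=
  ⟨CFC.sqrt A, Matrix.nonneg_iff_posSemidef.mp (CFC.sqrt_nonneg A),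
    CFC.sqrt_mul_sqrt_self A (Matrix.nonneg_iff_posSemidef.mpr hA)⟩

lemma psd_map {M : Matrix (Fin n) (Fin n) ℝ} (hM : M.PosSemidef) :
    (M.map (Complex.ofReal)).PosSemidef := by
  obtain ⟨B, hB1, rfl⟩ := exists_sqrt_psd hM
  have hBB : B * B = Bᴴ * B := by rw [hB1.1]
  rw [hBB]
  have h : (Bᴴ * B).map (Complex.ofReal)
      = (B.map Complex.ofReal)ᴴ * (B.map Complex.ofReal) := by
    rw [mapC_mul, mapC_conjTranspose]
    rfl
  rw [h]
  exact Matrix.posSemidef_conjTranspose_mul_self _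

lemma spectrum_herm_subset {M : Matrix (Fin n) (Fin n) ℂ} (hM : M.IsHermitian) :
    spectrum ℂ M ⊆ Set.range (fun i => (hM.eigenvalues i : ℂ)) := by
  have h1 : spectrum ℂ M
      = spectrum ℂ (Matrix.diagonal (RCLike.ofReal ∘ hM.eigenvalues) : Matrix (Fin n) (Fin n) ℂ) := by
    conv_lhs => rw [hM.spectral_theorem, Unitary.conjStarAlgAut_apply, Unitary.spectrum_star_right_conjugate]
  rw [h1, spectrum_diagonal]
  rintro μ ⟨i, hi⟩
  exact ⟨i, hi⟩

lemma posdef_unitary_conj {C : Matrix (Fin n) (Fin n) ℂ} (hC : C.PosDef)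
    (U : Matrix.unitaryGroup (Fin n) ℂ) :
    ((U : Matrix (Fin n) (Fin n) ℂ) * C * star (U : Matrix (Fin n) (Fin n) ℂ)).PosDef := by
  set V : Matrix (Fin n) (Fin n) ℂ := (U : Matrix (Fin n) (Fin n) ℂ) with hV
  have hVstar : star V = Vᴴ := rfl
  refine Matrix.PosDef.of_dotProduct_mulVec_pos ?_ ?_
  · rw [hVstar, show V * C * Vᴴ = (Vᴴ)ᴴ * C * Vᴴ by rw [conjTranspose_conjTranspose]]
    exact Matrix.isHermitian_conjTranspose_mul_mul _ hC.1
  · intro x hx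
    have hne : Vᴴ *ᵥ x ≠ 0 := by
      intro h
      apply hx
      have h2 : V *ᵥ (Vᴴ *ᵥ x) = 0 := by rw [h, mulVec_zero]
      rwa [mulVec_mulVec, show Vᴴ = star V from rfl,
        (Matrix.mem_unitaryGroup_iff.mp U.2), one_mulVec] at h2
    have h3 := hC.dotProduct_mulVec_pos hne
    rw [hVstar]
    rwa [star_mulVec, conjTranspose_conjTranspose, ← dotProduct_mulVec,
      mulVec_mulVec, mulVec_mulVec] at h3

lemma one_sub_posDef_of_eigenvalues_lt {M : Matrix (Fin n) (Fin n) ℂ} (hM : M.IsHermitian)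
    (h : ∀ i, hM.eigenvalues i < 1) : (1 - M).PosDef := by
  have hd : (Matrix.diagonal (RCLike.ofReal ∘ fun i => 1 - hM.eigenvalues i)
        : Matrix (Fin n) (Fin n) ℂ)
      = 1 - Matrix.diagonal (RCLike.ofReal ∘ hM.eigenvalues) := by
    ext i j
    rcases eq_or_ne i j with rfl | hij
    · simp [Matrix.one_apply_eq]
    · simp [Matrix.diagonal_apply_ne _ hij, Matrix.one_apply_ne hij]
  have key : (1 : Matrix (Fin n) (Fin n) ℂ) - M =
      (hM.eigenvectorUnitary : Matrix (Fin n) (Fin n) ℂ) *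
        (Matrix.diagonal (RCLike.ofReal ∘ fun i => 1 - hM.eigenvalues i)) *
        star (hM.eigenvectorUnitary : Matrix (Fin n) (Fin n) ℂ) := by
    rw [hd, mul_sub, sub_mul, mul_one,
      Matrix.mem_unitaryGroup_iff.mp hM.eigenvectorUnitary.2]
    congr 1
    exact hM.spectral_theorem
  rw [key]
  exact posdef_unitary_conj (Matrix.PosDef.diagonal fun i => by
    have h2 : (0:ℝ) < 1 - hM.eigenvalues i := by linarith [h i]
    exact RCLike.ofReal_pos.mpr h2) _

lemma eigenvalues_lt_of_one_sub_posDef {M : Matrix (Fin n) (Fin n) ℂ} (hM : M.IsHermitian)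
    (h : (1 - M).PosDef) (i : Fin n) : hM.eigenvalues i < 1 := by
  set v := hM.eigenvectorBasis i with hv
  have hv0 : (⇑v : Fin n → ℂ) ≠ 0 := by
    have h0 := hM.eigenvectorBasis.orthonormal.ne_zero i
    rw [← hv] at h0
    intro hc
    apply h0
    ext j
    exact congrFun hc j
  have hpos := h.re_dotProduct_pos hv0
  have hvv : (dotProduct (star (⇑v : Fin n → ℂ)) ⇑v) = 1 := by
    have h1 : (inner ℂ v v : ℂ) = dotProduct (star (⇑v : Fin n → ℂ)) ⇑v := by
      rw [EuclideanSpace.inner_eq_star_dotProduct, dotProduct_comm]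
    rw [← h1, inner_self_eq_norm_sq_to_K, hM.eigenvectorBasis.orthonormal.1 i]
    norm_num
  rw [sub_mulVec, one_mulVec, dotProduct_sub, hvv, map_sub] at hpos
  have he := hM.eigenvalues_eq i
  rw [← hv] at he
  rw [he]
  have : RCLike.re (1 : ℂ) = 1 := by simp
  rw [this] at hpos
  linarith [hpos]

end AuxMaxEig

/-- monotonicity of the largest eigenvalue of `A⬝(·)` for
`A = Aᵀ ≥ 0` and symmetric `D ≤ B`. -/
theorem max_eig_monotone_psd_product {n : ℕ} (A B D : Matrix (Fin n) (Fin n) ℝ)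
    (hA : A.PosSemidef) (hB : B.IsHermitian) (hD : D.IsHermitian)
    (hDB : (B - D).PosSemidef)
    (hAB : maxEigLT (A * B) 1) :
    maxEigLT (A * D) 1 := by
  classical
  intro μ hμ
  rcases eq_or_ne μ 0 with rfl | hμ0
  · exact ⟨rfl, by norm_num⟩
  obtain ⟨S, hS, hSS⟩ := exists_sqrt_psd hA
  have swap : ∀ M : Matrix (Fin n) (Fin n) ℝ,
      spectrum ℂ ((A * M).map Complex.ofReal) \ {0}
        = spectrum ℂ ((S * M * S).map Complex.ofReal) \ {0} := by
    intro M
    have h1 : (A * M).map Complex.ofReal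
        = (S.map Complex.ofReal) * ((S * M).map Complex.ofReal) := by
      rw [← mapC_mul, ← hSS, Matrix.mul_assoc]
    have h2 : (S * M * S).map Complex.ofReal
        = ((S * M).map Complex.ofReal) * (S.map Complex.ofReal) := by
      rw [← mapC_mul]
    rw [h1, h2]
    exact spectrum.nonzero_mul_comm _ _
  -- Hermitian structure of S*B*S and S*D*S
  have hTBherm : (S * B * S).IsHermitian := by
    have h := Matrix.isHermitian_conjTranspose_mul_mul S hB
    rwa [hS.1] at h
  have hTDherm : (S * D * S).IsHermitian := by
    have h := Matrix.isHermitian_conjTranspose_mul_mul S hD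
    rwa [hS.1] at h
  have hTBc : ((S * B * S).map Complex.ofReal).IsHermitian := herm_map hTBherm
  have hTDc : ((S * D * S).map Complex.ofReal).IsHermitian := herm_map hTDherm
  -- eigenvalues of (S*B*S)_ℂ are < 1
  have eigB : ∀ i, hTBc.eigenvalues i < 1 := by
    intro i
    rcases eq_or_ne (hTBc.eigenvalues i) 0 with h0 | h0
    · rw [h0]; norm_num
    · have hmem : ((hTBc.eigenvalues i : ℝ) : ℂ) ∈ spectrum ℂ ((S * B * S).map Complex.ofReal) := by
        have h1 := hTBc.eigenvalues_mem_spectrum_real i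
        have h2 := (spectrum.algebraMap_mem_iff ℂ).mpr h1
        simpa using h2
      have hmem2 : ((hTBc.eigenvalues i : ℝ) : ℂ)
          ∈ spectrum ℂ ((A * B).map Complex.ofReal) \ {0} := by
        rw [swap B]
        exact ⟨hmem, by simp [h0]⟩
      have := hAB _ hmem2.1
      simpa using this.2
  have posdef1 : ((1 : Matrix (Fin n) (Fin n) ℂ) - (S * B * S).map Complex.ofReal).PosDef :=
    one_sub_posDef_of_eigenvalues_lt hTBc eigB
  have psd2 : ((S * B * S).map Complex.ofReal - (S * D * S).map Complex.ofReal).PosSemidef := by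
    have hr : S * (B - D) * S = S * B * S - S * D * S := by
      rw [Matrix.mul_sub, Matrix.sub_mul]
    have hpsd : (S * (B - D) * S).PosSemidef := by
      have h := hDB.conjTranspose_mul_mul_same S
      rwa [hS.1] at h
    rw [← mapC_sub, ← hr]
    exact psd_map hpsd
  have posdef3 : ((1 : Matrix (Fin n) (Fin n) ℂ) - (S * D * S).map Complex.ofReal).PosDef := by
    have h : (1 : Matrix (Fin n) (Fin n) ℂ) - (S * D * S).map Complex.ofReal
        = ((1 : Matrix (Fin n) (Fin n) ℂ) - (S * B * S).map Complex.ofReal)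
          + ((S * B * S).map Complex.ofReal - (S * D * S).map Complex.ofReal) := by
      abel
    rw [h]
    exact posdef1.add_posSemidef psd2
  have eigD : ∀ i, hTDc.eigenvalues i < 1 :=
    eigenvalues_lt_of_one_sub_posDef hTDc posdef3
  -- conclude
  have hμmem : μ ∈ spectrum ℂ ((S * D * S).map Complex.ofReal) \ {0} := by
    rw [← swap D]
    exact ⟨hμ, by simpa using hμ0⟩
  obtain ⟨i, hi⟩ := spectrum_herm_subset hTDc hμmem.1
  refine ⟨?_, ?_⟩
  · rw [← hi]; exact Complex.ofReal_im _
  · rw [← hi]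
    simpa using eigD i

end NIControl
end
end
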